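/- Let I ⊆ ℝ be a nonempty interval, let ζ₁,…,ζ_N ∈ I, let ν = (1/N) Σ_{i=1}^N δ_{ζᵢ}, and let ε > 0. Then sup{ E_{ζ∼Q}[ζ] : Q a probability measure supported on the closure of I with finite first moment and W₁(Q, ν) ≤ ε } = min{ (1/N) Σ_{i=1}^N ζ_i + ε, sup I } (with the convention that the minimum equals (1/N) Σᵢ ζᵢ + ε when sup I = +∞). -/

import Mathlib

open MeasureTheory
open scoped ENNReal

/-- The `p`-th power transport cost of a coupling `π` with ground cost `d`. -/
noncomputable def transportCost {α : Type*} [MeasurableSpace α]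
    (p : ℝ) (d : α → α → ℝ) (π : Measure (α × α)) : ℝ≥0∞ :=
  ∫⁻ w, ENNReal.ofReal (d w.1 w.2 ^ p) ∂π

/-- The `p`-Wasserstein distance between `μ` and `ν` with ground cost `d`:
the infimum of the `p`-th root of the transport cost over all couplings. -/
noncomputable def wassersteinDist {α : Type*} [MeasurableSpace α]
    (p : ℝ) (d : α → α → ℝ) (μ ν : Measure α) : ℝ≥0∞ :=
  (⨅ (π : Measure (α × α)) (_ : IsProbabilityMeasure π ∧
      π.map Prod.fst = μ ∧ π.map Prod.snd = ν), transportCost p d π) ^ (1 / p)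

/-- The empirical distribution of the points `ξ 1, …, ξ N`. -/
noncomputable def empMeasure {α : Type*} [MeasurableSpace α] {N : ℕ}
    (ξ : Fin N → α) : Measure α :=
  (N : ℝ≥0∞)⁻¹ • ∑ i, Measure.dirac (ξ i)

/-- Probability measures on `ℝ` supported on `S`, with finite `p`-th moment, within
`p`-Wasserstein distance (with cost `|·|`) `ε` of `ν`. -/
def realWassersteinBall (p : ℝ) (S : Set ℝ) (ν : Measure ℝ) (ε : ℝ) : Set (Measure ℝ) :=
  {Q | IsProbabilityMeasure Q ∧ Q Sᶜ = 0 ∧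
    (∫⁻ t, ENNReal.ofReal (|t| ^ p) ∂Q) < ⊤ ∧
    wassersteinDist p (fun a b => |a - b|) Q ν ≤ ENNReal.ofReal ε}

section helpers

variable {α : Type*} [MeasurableSpace α] {N : ℕ}

lemma map_sum_meas {β : Type*} [MeasurableSpace β] {ι : Type*} (s : Finset ι)
    (μ : ι → Measure α) {f : α → β} (hf : Measurable f) :
    (∑ i ∈ s, μ i).map f = ∑ i ∈ s, (μ i).map f := by
  classical
  induction s using Finset.induction with
  | empty => simp
  | insert _ _ h ih => rw [Finset.sum_insert h, Finset.sum_insert h, Measure.map_add _ _ hf, ih]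

lemma empMeasure_isProb (hN : 0 < N) (ξ : Fin N → α) :
    IsProbabilityMeasure (empMeasure ξ) := by
  constructor
  simp [empMeasure, Measure.smul_apply, Measure.finset_sum_apply, smul_eq_mul]
  rw [ENNReal.inv_mul_cancel] <;> simp [hN.ne']

lemma empMeasure_map {β : Type*} [MeasurableSpace β] (ξ : Fin N → α)
    {f : α → β} (hf : Measurable f) :
    (empMeasure ξ).map f = empMeasure (f ∘ ξ) := by
  simp only [empMeasure, Measure.map_smul, map_sum_meas _ _ hf, Measure.map_dirac' hf,
    Function.comp]

lemma empMeasure_apply_eq_zero [MeasurableSingletonClass α] (ξ : Fin N → α) {s : Set α}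
    (h : ∀ i, ξ i ∉ s) : empMeasure ξ s = 0 := by
  simp [empMeasure, Measure.smul_apply, Measure.finset_sum_apply, Measure.dirac_apply,
    Set.indicator_of_notMem, h]

lemma lintegral_empMeasure (ξ : Fin N → ℝ) (f : ℝ → ℝ≥0∞) (hf : Measurable f) :
    ∫⁻ t, f t ∂(empMeasure ξ) = (N : ℝ≥0∞)⁻¹ * ∑ i, f (ξ i) := by
  simp [empMeasure, lintegral_smul_measure, lintegral_finset_sum_measure, lintegral_dirac' _ hf]

lemma integrable_id_dirac (a : ℝ) : Integrable (fun t : ℝ => t) (Measure.dirac a) := by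
  refine ⟨aestronglyMeasurable_id, ?_⟩
  simp [HasFiniteIntegral, lintegral_dirac]

lemma integrable_id_empMeasure (hN : 0 < N) (ξ : Fin N → ℝ) :
    Integrable (fun t : ℝ => t) (empMeasure ξ) := by
  rw [empMeasure]
  exact (integrable_finset_sum_measure.2 fun i _ => integrable_id_dirac (ξ i)).smul_measure
    (by simp [hN.ne'])

lemma integral_empMeasure (ξ : Fin N → ℝ) :
    ∫ t, t ∂(empMeasure ξ) = (1 / (N:ℝ)) * ∑ i, ξ i := by
  rw [empMeasure, integral_smul_measure, integral_finset_sum_measure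
    (fun i _ => integrable_id_dirac (ξ i))]
  simp [ENNReal.toReal_inv, one_div]

lemma abs_moment_measurable : Measurable (fun t : ℝ => ENNReal.ofReal (|t| ^ (1:ℝ))) := by
  fun_prop

lemma moment_empMeasure_lt_top (hN : 0 < N) (ξ : Fin N → ℝ) :
    (∫⁻ t, ENNReal.ofReal (|t| ^ (1:ℝ)) ∂(empMeasure ξ)) < ⊤ := by
  rw [lintegral_empMeasure _ _ abs_moment_measurable]
  refine ENNReal.mul_lt_top ?_ ?_
  · exact ENNReal.inv_lt_top.2 (by exact_mod_cast hN)
  · exact ENNReal.sum_lt_top.2 fun i _ => ENNReal.ofReal_lt_top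

lemma integrable_of_moment {Q : Measure ℝ}
    (h : (∫⁻ t, ENNReal.ofReal (|t| ^ (1:ℝ)) ∂Q) < ⊤) :
    Integrable (fun t : ℝ => t) Q := by
  refine ⟨aestronglyMeasurable_id, ?_⟩
  rw [HasFiniteIntegral]
  have : ∀ t : ℝ, ‖t‖ₑ = ENNReal.ofReal (|t| ^ (1:ℝ)) := fun t => by
    rw [Real.rpow_one, ← ofReal_norm_eq_enorm, Real.norm_eq_abs]
  simp only [this]
  exact h

end helpers

section wd

lemma wassersteinDist_one {α : Type*} [MeasurableSpace α] (d : α → α → ℝ) (μ ν : Measure α) :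
    wassersteinDist 1 d μ ν = ⨅ (π : Measure (α × α)) (_ : IsProbabilityMeasure π ∧
      π.map Prod.fst = μ ∧ π.map Prod.snd = ν), transportCost 1 d π := by
  rw [wassersteinDist]
  norm_num

lemma exists_coupling_of_wd_le {d : ℝ → ℝ → ℝ} {Q ν : Measure ℝ} {ε r : ℝ}
    (h : wassersteinDist 1 d Q ν ≤ ENNReal.ofReal ε) (hr : ε < r) (hr0 : 0 < r) :
    ∃ π : Measure (ℝ × ℝ), (IsProbabilityMeasure π ∧
      π.map Prod.fst = Q ∧ π.map Prod.snd = ν) ∧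
      transportCost 1 d π ≤ ENNReal.ofReal r := by
  rw [wassersteinDist_one] at h
  have hlt : (⨅ (π : Measure (ℝ × ℝ)) (_ : IsProbabilityMeasure π ∧
      π.map Prod.fst = Q ∧ π.map Prod.snd = ν), transportCost 1 d π) < ENNReal.ofReal r :=
    lt_of_le_of_lt h (ENNReal.ofReal_lt_ofReal_iff hr0 |>.2 hr)
  rw [iInf_lt_iff] at hlt
  obtain ⟨π, hπ⟩ := hlt
  rw [iInf_lt_iff] at hπ
  obtain ⟨hP, hc⟩ := hπ
  exact ⟨π, hP, hc.le⟩

lemma wd_le_of_coupling {d : ℝ → ℝ → ℝ} {Q ν : Measure ℝ} {ε : ℝ}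
    (π : Measure (ℝ × ℝ)) (hP : IsProbabilityMeasure π ∧
      π.map Prod.fst = Q ∧ π.map Prod.snd = ν)
    (hc : transportCost 1 d π ≤ ENNReal.ofReal ε) :
    wassersteinDist 1 d Q ν ≤ ENNReal.ofReal ε := by
  rw [wassersteinDist_one]
  exact le_trans (iInf₂_le π hP) hc

lemma mean_le_of_coupling {Q ν : Measure ℝ}
    (hQm : Integrable (fun t : ℝ => t) Q)
    (hνint : Integrable (fun t : ℝ => t) ν) {π : Measure (ℝ × ℝ)}
    (h1 : π.map Prod.fst = Q) (h2 : π.map Prod.snd = ν)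
    {r : ℝ} (hr : 0 ≤ r)
    (hc : transportCost 1 (fun a b => |a - b|) π ≤ ENNReal.ofReal r) :
    ∫ t, t ∂Q ≤ (∫ t, t ∂ν) + r := by
  have hint1 : Integrable (fun w : ℝ × ℝ => w.1) π := by
    rw [← h1] at hQm
    exact (integrable_map_measure aestronglyMeasurable_id measurable_fst.aemeasurable).1 hQm
  have hint2 : Integrable (fun w : ℝ × ℝ => w.2) π := by
    rw [← h2] at hνint
    exact (integrable_map_measure aestronglyMeasurable_id measurable_snd.aemeasurable).1 hνint
  have e1 : ∫ t, t ∂Q = ∫ w, w.1 ∂π := by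
    rw [← h1]; exact integral_map measurable_fst.aemeasurable measurable_id.aestronglyMeasurable
  have e2 : ∫ t, t ∂ν = ∫ w, w.2 ∂π := by
    rw [← h2]; exact integral_map measurable_snd.aemeasurable measurable_id.aestronglyMeasurable
  have habs : ∫ w, |w.1 - w.2| ∂π ≤ r := by
    have hm : AEStronglyMeasurable (fun w : ℝ × ℝ => |w.1 - w.2|) π :=
      ((measurable_fst.sub measurable_snd).abs).aestronglyMeasurable
    rw [integral_eq_lintegral_of_nonneg_ae (Filter.Eventually.of_forall fun w => abs_nonneg _) hm]
    have : (∫⁻ w, ENNReal.ofReal |w.1 - w.2| ∂π) ≤ ENNReal.ofReal r := by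
      refine le_trans (le_of_eq ?_) hc
      simp only [transportCost, Real.rpow_one]
    calc (∫⁻ w, ENNReal.ofReal |w.1 - w.2| ∂π).toReal
        ≤ (ENNReal.ofReal r).toReal := ENNReal.toReal_mono ENNReal.ofReal_ne_top this
      _ = r := ENNReal.toReal_ofReal hr
  have : ∫ w, (w.1 - w.2) ∂π ≤ ∫ w, |w.1 - w.2| ∂π :=
    integral_mono (hint1.sub hint2) (hint1.sub hint2).abs fun w => le_abs_self _
  rw [integral_sub hint1 hint2] at this
  rw [e1, e2]
  linarith

lemma int_le_csSup {Q : Measure ℝ} [hQp : IsProbabilityMeasure Q]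
    (hint : Integrable (fun t : ℝ => t) Q)
    {I : Set ℝ} (hb : BddAbove I) (h0 : Q (closure I)ᶜ = 0) :
    ∫ t, t ∂Q ≤ sSup I := by
  have hsub : closure I ⊆ Set.Iic (sSup I) :=
    closure_minimal (fun x hx => le_csSup hb hx) isClosed_Iic
  have hae : ∀ᵐ t ∂Q, t ≤ sSup I := by
    rw [ae_iff]
    refine measure_mono_null (fun t ht => ?_) h0
    simp only [Set.mem_compl_iff]
    intro hmem
    exact ht (hsub hmem)
  calc ∫ t, t ∂Q ≤ ∫ _, sSup I ∂Q := integral_mono_ae hint (integrable_const _) hae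
    _ = sSup I := by simp

end wd
section construction

lemma constructionA {N : ℕ} (hN : 0 < N) (ζ : Fin N → ℝ) (S : Set ℝ) {ε : ℝ}
    (hε : 0 ≤ ε) (hζS : ∀ i, ζ i + ε ∈ S) :
    ∃ Q ∈ realWassersteinBall 1 S (empMeasure ζ) ε,
      ∫ t, t ∂Q = (1 / (N:ℝ)) * (∑ i, ζ i) + ε := by
  classical
  set ν := empMeasure ζ with hν
  haveI hνp : IsProbabilityMeasure ν := empMeasure_isProb hN ζ
  set Q : Measure ℝ := empMeasure (fun i => ζ i + ε) with hQ
  have hg : Measurable (fun t : ℝ => (t + ε, t)) := by fun_prop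
  set π : Measure (ℝ × ℝ) := ν.map (fun t : ℝ => (t + ε, t)) with hπ
  haveI hπp : IsProbabilityMeasure π := Measure.isProbabilityMeasure_map hg.aemeasurable
  have hfst : π.map Prod.fst = Q := by
    rw [hπ, Measure.map_map measurable_fst hg]
    have : (Prod.fst ∘ fun t : ℝ => (t + ε, t)) = fun t : ℝ => t + ε := rfl
    rw [this, hν, empMeasure_map _ (by fun_prop)]
    rfl
  have hsnd : π.map Prod.snd = ν := by
    rw [hπ, Measure.map_map measurable_snd hg]
    have : (Prod.snd ∘ fun t : ℝ => (t + ε, t)) = fun t : ℝ => t := rfl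
    rw [this]
    exact Measure.map_id
  have hcost : transportCost 1 (fun a b => |a - b|) π ≤ ENNReal.ofReal ε := by
    rw [transportCost, hπ, lintegral_map (by fun_prop) hg]
    simp only [add_sub_cancel_left, Real.rpow_one, abs_of_nonneg hε]
    rw [lintegral_const, measure_univ, mul_one]
  refine ⟨Q, ⟨empMeasure_isProb hN _, ?_, moment_empMeasure_lt_top hN _, ?_⟩, ?_⟩
  · exact empMeasure_apply_eq_zero _ fun i hi => hi (hζS i)
  · exact wd_le_of_coupling π ⟨hπp, hfst, hsnd⟩ hcost
  · rw [hQ, integral_empMeasure]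
    rw [Finset.sum_add_distrib, Finset.sum_const, Finset.card_univ, Fintype.card_fin]
    field_simp
    ring

end construction
section constructionB

lemma constructionB {N : ℕ} (hN : 0 < N) (ζ : Fin N → ℝ) (S : Set ℝ)
    (hζS : ∀ i, ζ i ∈ S) {s : ℝ} (hsS : s ∈ S) (hs : ∀ i, ζ i ≤ s)
    {p ε : ℝ} (hp0 : 0 ≤ p) (hp1 : p ≤ 1) (hε : 0 ≤ ε)
    (hcost : p * (s - (1 / (N:ℝ)) * ∑ i, ζ i) ≤ ε) :
    ∃ Q ∈ realWassersteinBall 1 S (empMeasure ζ) ε,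
      ∫ t, t ∂Q = (1 / (N:ℝ)) * (∑ i, ζ i) + p * (s - (1 / (N:ℝ)) * ∑ i, ζ i) := by
  classical
  set m : ℝ := (1 / (N:ℝ)) * ∑ i, ζ i with hm
  set ν := empMeasure ζ with hν
  haveI hνp : IsProbabilityMeasure ν := empMeasure_isProb hN ζ
  set a : ℝ≥0∞ := ENNReal.ofReal (1 - p) with ha
  set b : ℝ≥0∞ := ENNReal.ofReal p with hb
  have hab : a + b = 1 := by
    rw [ha, hb, ← ENNReal.ofReal_add (by linarith) hp0]
    norm_num
  set Q : Measure ℝ := a • ν + b • Measure.dirac s with hQ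
  have hg1 : Measurable (fun t : ℝ => (t, t)) := by fun_prop
  have hg2 : Measurable (fun t : ℝ => (s, t)) := by fun_prop
  set π : Measure (ℝ × ℝ) := a • (ν.map fun t : ℝ => (t, t)) + b • (ν.map fun t : ℝ => (s, t))
    with hπ
  have hmapid : ν.map (fun t : ℝ => t) = ν := Measure.map_id
  haveI hπp : IsProbabilityMeasure π := by
    constructor
    rw [hπ]
    simp only [Measure.add_apply, Measure.smul_apply, smul_eq_mul,
      Measure.map_apply hg1 MeasurableSet.univ, Measure.map_apply hg2 MeasurableSet.univ]
    simp [measure_univ, hab]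
  have hfst : π.map Prod.fst = Q := by
    rw [hπ, Measure.map_add _ _ measurable_fst, Measure.map_smul, Measure.map_smul,
      Measure.map_map measurable_fst hg1, Measure.map_map measurable_fst hg2]
    have e1 : (Prod.fst ∘ fun t : ℝ => (t, t)) = fun t : ℝ => t := rfl
    have e2 : (Prod.fst ∘ fun t : ℝ => (s, t)) = fun _ : ℝ => s := rfl
    rw [e1, e2, hmapid, Measure.map_const, measure_univ, one_smul]
  have hsnd : π.map Prod.snd = ν := by
    rw [hπ, Measure.map_add _ _ measurable_snd, Measure.map_smul, Measure.map_smul,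
      Measure.map_map measurable_snd hg1, Measure.map_map measurable_snd hg2]
    have e1 : (Prod.snd ∘ fun t : ℝ => (t, t)) = fun t : ℝ => t := rfl
    have e2 : (Prod.snd ∘ fun t : ℝ => (s, t)) = fun t : ℝ => t := rfl
    rw [e1, e2, hmapid, ← add_smul, hab, one_smul]
  have hsum : (1 / (N:ℝ)) * ∑ i, (s - ζ i) = s - m := by
    rw [Finset.sum_sub_distrib, Finset.sum_const, Finset.card_univ, Fintype.card_fin, hm]
    have : (N:ℝ) ≠ 0 := by exact_mod_cast hN.ne'
    field_simp
    ring
  have hNinv : (N : ℝ≥0∞)⁻¹ = ENNReal.ofReal (1 / (N:ℝ)) := by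
    rw [one_div, ENNReal.ofReal_inv_of_pos (by exact_mod_cast hN)]
    congr 1
    exact (ENNReal.ofReal_natCast N).symm
  have hcost' : transportCost 1 (fun a b => |a - b|) π ≤ ENNReal.ofReal ε := by
    rw [transportCost, hπ, lintegral_add_measure, lintegral_smul_measure,
      lintegral_smul_measure, lintegral_map (by fun_prop) hg1, lintegral_map (by fun_prop) hg2]
    simp only [sub_self, abs_zero, Real.rpow_one]
    simp only [ENNReal.ofReal_zero, lintegral_zero, mul_zero, zero_add]
    have : ∫⁻ t, ENNReal.ofReal |s - t| ∂ν = ENNReal.ofReal (s - m) := by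
      rw [hν, lintegral_empMeasure _ _ (by fun_prop), hNinv]
      have habs : ∀ i, |s - ζ i| = s - ζ i := fun i => abs_of_nonneg (by linarith [hs i])
      simp only [habs]
      rw [← ENNReal.ofReal_sum_of_nonneg (fun i _ => by linarith [hs i]),
        ← ENNReal.ofReal_mul (by positivity), hsum]
    rw [this, hb, smul_zero, zero_add, smul_eq_mul, ← ENNReal.ofReal_mul hp0]
    exact ENNReal.ofReal_le_ofReal hcost
  have hintν : Integrable (fun t : ℝ => t) ν := integrable_id_empMeasure hN ζ
  have hintQ1 : Integrable (fun t : ℝ => t) (a • ν : Measure ℝ) :=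
    hintν.smul_measure ENNReal.ofReal_ne_top
  have hintQ2 : Integrable (fun t : ℝ => t) (b • Measure.dirac s : Measure ℝ) :=
    (integrable_id_dirac s).smul_measure ENNReal.ofReal_ne_top
  refine ⟨Q, ⟨?_, ?_, ?_, ?_⟩, ?_⟩
  · constructor
    rw [hQ]
    simp [Measure.add_apply, Measure.smul_apply, measure_univ, smul_eq_mul, hab]
  · rw [hQ]
    simp only [Measure.add_apply, Measure.smul_apply, smul_eq_mul]
    rw [empMeasure_apply_eq_zero _ (fun i => by simp [hζS i]), Measure.dirac_apply,
      Set.indicator_of_notMem (by simpa using hsS)]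
    simp
  · rw [hQ, lintegral_add_measure, lintegral_smul_measure, lintegral_smul_measure,
      lintegral_dirac' _ abs_moment_measurable]
    exact ENNReal.add_lt_top.2 ⟨ENNReal.mul_lt_top ENNReal.ofReal_lt_top
      (moment_empMeasure_lt_top hN ζ),
      ENNReal.mul_lt_top ENNReal.ofReal_lt_top ENNReal.ofReal_lt_top⟩
  · exact wd_le_of_coupling π ⟨hπp, hfst, hsnd⟩ hcost'
  · rw [hQ, integral_add_measure hintQ1 hintQ2, integral_smul_measure, integral_smul_measure,
      integral_dirac, integral_empMeasure, ha, hb,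
      ENNReal.toReal_ofReal (by linarith), ENNReal.toReal_ofReal hp0]
    simp only [smul_eq_mul]
    ring

end constructionB
section ereal

lemma ereal_sSup_image_of_bdd {I : Set ℝ} (hne : I.Nonempty) (hb : BddAbove I) :
    sSup ((fun t : ℝ => (t : EReal)) '' I) = ((sSup I : ℝ) : EReal) :=
  (Monotone.map_csSup_of_continuousAt (continuous_coe_real_ereal.continuousAt)
    (fun _ _ h => EReal.coe_le_coe_iff.2 h) hne hb).symm

lemma ereal_sSup_image_of_unbdd {I : Set ℝ} (hne : I.Nonempty) (hnb : ¬ BddAbove I) :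
    sSup ((fun t : ℝ => (t : EReal)) '' I) = ⊤ := by
  rw [sSup_eq_top]
  intro b hb
  induction b using EReal.rec with
  | bot => obtain ⟨x, hx⟩ := hne; exact ⟨(x : EReal), ⟨x, hx, rfl⟩, EReal.bot_lt_coe x⟩
  | coe r =>
      obtain ⟨x, hx, hrx⟩ := not_bddAbove_iff.1 hnb r
      exact ⟨(x : EReal), ⟨x, hx, rfl⟩, EReal.coe_lt_coe_iff.2 hrx⟩
  | top => exact absurd hb (lt_irrefl _)

end ereal

/-- Worst-case expected value over a `1`-Wasserstein ball around an empirical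
distribution on an interval: `sup = min(mean + ε, sup I)`. -/
theorem statement15 {N : ℕ} (hN : 0 < N)
    (I : Set ℝ) (hI : I.Nonempty) (hIc : I.OrdConnected)
    (ζ : Fin N → ℝ) (hζ : ∀ i, ζ i ∈ I) (ε : ℝ) (hε : 0 < ε) :
    sSup ((fun Q : Measure ℝ => ((∫ t, t ∂Q : ℝ) : EReal)) ''
        realWassersteinBall 1 (closure I) (empMeasure ζ) ε) =
    min (((1 / (N : ℝ)) * ∑ i, ζ i + ε : ℝ) : EReal)
      (sSup ((fun t : ℝ => (t : EReal)) '' I)) := by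
  classical
  set ν := empMeasure ζ with hν
  set m : ℝ := (1 / (N:ℝ)) * ∑ i, ζ i with hm
  haveI hνp : IsProbabilityMeasure ν := empMeasure_isProb hN ζ
  have hνint : Integrable (fun t : ℝ => t) ν := integrable_id_empMeasure hN ζ
  have hνmean : ∫ t, t ∂ν = m := integral_empMeasure ζ
  have hub : ∀ Q ∈ realWassersteinBall 1 (closure I) ν ε, ∫ t, t ∂Q ≤ m + ε := by
    rintro Q ⟨hQp, hQs, hQm, hQw⟩
    have hQint := integrable_of_moment hQm
    refine le_of_forall_pos_le_add fun δ hδ => ?_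
    obtain ⟨π, ⟨hπp, h1, h2⟩, hc⟩ := exists_coupling_of_wd_le hQw
      (show ε < ε + δ by linarith) (by linarith)
    have := mean_le_of_coupling hQint hνint h1 h2 (by linarith) hc
    rw [hνmean] at this
    linarith
  by_cases hb : BddAbove I
  · -- bounded above
    set s : ℝ := sSup I with hsdef
    have hζs : ∀ i, ζ i ≤ s := fun i => le_csSup hb (hζ i)
    have hms : m ≤ s := by
      have h1 : ∑ i, ζ i ≤ ∑ _i : Fin N, s := Finset.sum_le_sum fun i _ => hζs i
      rw [Finset.sum_const, Finset.card_univ, Fintype.card_fin, nsmul_eq_mul] at h1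
      have hN' : (0:ℝ) < N := by exact_mod_cast hN
      rw [hm]
      rw [div_mul_eq_mul_div, one_mul, div_le_iff₀ hN']
      linarith
    -- choose p
    obtain ⟨p, hp0, hp1, hpc, hpv⟩ :
        ∃ p : ℝ, 0 ≤ p ∧ p ≤ 1 ∧ p * (s - m) ≤ ε ∧ m + p * (s - m) = min (m + ε) s := by
      rcases eq_or_lt_of_le hms with heq | hlt
      · exact ⟨0, le_refl _, zero_le_one, by simp [hε.le], by
          rw [← heq]; simp; linarith⟩
      · refine ⟨min ε (s - m) / (s - m), div_nonneg (le_min hε.le (by linarith)) (by linarith), ?_, ?_, ?_⟩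
        · rw [div_le_one (by linarith)]
          exact min_le_right _ _
        · rw [div_mul_cancel₀ _ (by linarith : s - m ≠ 0)]
          exact min_le_left _ _
        · rw [div_mul_cancel₀ _ (by linarith : s - m ≠ 0)]
          rw [← min_add_add_left]
          congr 1
          ring
    obtain ⟨Q₀, hQ₀mem, hQ₀val⟩ := constructionB hN ζ (closure I)
      (fun i => subset_closure (hζ i)) (csSup_mem_closure hI hb) hζs hp0 hp1 hε.le hpc
    rw [ereal_sSup_image_of_bdd hI hb]
    have hmin : min ((m + ε : ℝ) : EReal) ((s : ℝ) : EReal) = ((min (m + ε) s : ℝ) : EReal) := by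
      rcases le_total (m + ε) s with h | h
      · rw [min_eq_left h, min_eq_left (EReal.coe_le_coe_iff.2 h)]
      · rw [min_eq_right h, min_eq_right (EReal.coe_le_coe_iff.2 h)]
    rw [hmin]
    apply le_antisymm
    · refine sSup_le ?_
      rintro x ⟨Q, hQ, rfl⟩
      refine EReal.coe_le_coe_iff.2 (le_min (hub Q hQ) ?_)
      obtain ⟨hQp, hQs, hQm, _⟩ := hQ
      haveI := hQp
      exact int_le_csSup (integrable_of_moment hQm) hb hQs
    · refine le_sSup ?_
      refine ⟨Q₀, hQ₀mem, ?_⟩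
      show ((∫ t, t ∂Q₀ : ℝ) : EReal) = _
      rw [hQ₀val, ← hm, hpv]
  · -- unbounded above
    rw [ereal_sSup_image_of_unbdd hI hb, min_eq_left le_top]
    have hshift : ∀ i, ζ i + ε ∈ closure I := by
      intro i
      obtain ⟨y, hy, hxy⟩ := not_bddAbove_iff.1 hb (ζ i + ε)
      exact subset_closure (hIc.out (hζ i) hy ⟨by linarith, by linarith⟩)
    obtain ⟨Q₀, hQ₀mem, hQ₀val⟩ := constructionA hN ζ (closure I) hε.le hshift
    apply le_antisymm
    · refine sSup_le ?_
      rintro x ⟨Q, hQ, rfl⟩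
      exact EReal.coe_le_coe_iff.2 (hub Q hQ)
    · refine le_sSup ⟨Q₀, hQ₀mem, ?_⟩
      show ((∫ t, t ∂Q₀ : ℝ) : EReal) = _
      rw [hQ₀val]
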